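/- Let σ : A* → A* be a primitive morphism on a finite alphabet A prolongable on a letter a (σ(a) = au with u nonempty). Then for every n > (#A)², every word of length 2 occurring in σ^m(a) for some m ∈ ℕ already occurs in σⁿ(a). -/

import Mathlib

open List

/-- Extension of a substitution to words. -/
def applyW {A : Type*} (σ : A → List A) (w : List A) : List A := w.flatMap σ

/-- `σⁿ` as a map on letters. -/
def powL {A : Type*} (σ : A → List A) (n : ℕ) (a : A) : List A := (applyW σ)^[n] [a]

/-- `σⁿ` as a map on words. -/
def iterW {A : Type*} (σ : A → List A) (n : ℕ) (w : List A) : List A := (applyW σ)^[n] w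

/-- A substitution is non-erasing if no letter maps to the empty word. -/
def NonErasing {A : Type*} (σ : A → List A) : Prop := ∀ a, σ a ≠ []

/-- A substitution is primitive if some power maps any letter to a word containing
every letter. -/
def PrimitiveSub {A : Type*} (σ : A → List A) : Prop :=
  ∃ k : ℕ, ∀ b c : A, b ∈ powL σ k c

/-- `σ` is prolongable on `a` if `σ a = a u` with `u` nonempty. -/
def Prolongable {A : Type*} (σ : A → List A) (a : A) : Prop :=
  ∃ u : List A, u ≠ [] ∧ σ a = a :: u

/-- `|σⁿ|`, the maximal length of the image of a letter under `σⁿ`. -/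
def maxLen {A : Type*} [Fintype A] (σ : A → List A) (n : ℕ) : ℕ :=
  Finset.univ.sup fun a => (powL σ n a).length

/-- `⟨σⁿ⟩`, the minimal length of the image of a letter under `σⁿ`. -/
def minLen {A : Type*} [Fintype A] [Nonempty A] (σ : A → List A) (n : ℕ) : ℕ :=
  Finset.univ.inf' Finset.univ_nonempty fun a => (powL σ n a).length

/-- The factor `x_{[i,j)}` of a two-sided sequence. -/
def seg {A : Type*} (x : ℤ → A) (i j : ℤ) : List A :=
  (List.range (j - i).toNat).map fun t => x (i + t)

/-- `w` is a factor of the two-sided sequence `x`. -/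
def FactorOf {A : Type*} (x : ℤ → A) (w : List A) : Prop :=
  ∃ i : ℤ, w = seg x i (i + w.length)

/-- The language of a substitution: words occurring in some `σⁿ(c)`. -/
def LangOf {A : Type*} (σ : A → List A) (w : List A) : Prop :=
  ∃ n : ℕ, ∃ c : A, w <:+: powL σ n c

/-- The map `f^{(1)}` associated with the substitution `τ` and the sequence `x`;
the map `f^{(p)}` of `σ` is obtained as `F (powL σ p) x`. -/
def F {A : Type*} (τ : A → List A) (x : ℤ → A) (i : ℤ) : ℤ :=
  if 0 ≤ i then (((seg x 0 i).flatMap τ).length : ℤ)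
  else -(((seg x i 0).flatMap τ).length : ℤ)

/-- `x` is a (two-sided) fixed point of `τ`:  `τ (x i)` is the block of `x`
between `f^{(1)}(i)` and `f^{(1)}(i+1)`. -/
def IsFixedPoint {A : Type*} (τ : A → List A) (x : ℤ → A) : Prop :=
  ∀ i : ℤ, seg x (F τ x i) (F τ x (i + 1)) = τ (x i)

/-- `x` is an admissible fixed point of `τ`: it is a fixed point and the word
`x₋₁x₀` occurs in some `τⁿ(c)`. -/
def Admissible {A : Type*} (τ : A → List A) (x : ℤ → A) : Prop :=
  IsFixedPoint τ x ∧ ∃ n : ℕ, ∃ c : A, [x (-1), x 0] <:+: powL τ n c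

/-- `τ` is recognizable on `x` with constant `L`. -/
def RecogWith {A : Type*} (τ : A → List A) (x : ℤ → A) (L : ℤ) : Prop :=
  0 < L ∧ ∀ i m : ℤ,
    seg x (m - L) (m + L + 1) = seg x (F τ x i - L) (F τ x i + L + 1) →
    ∃ j : ℤ, m = F τ x j ∧ x i = x j

/-- `x` is `k`-power-free: no nonempty word `w` has `w^k` as a factor of `x`. -/
def PowerFree {A : Type*} (x : ℤ → A) (k : ℕ) : Prop :=
  ∀ w : List A, w ≠ [] → ¬ FactorOf x (List.replicate k w).flatten

/-- `x` is recurrent: every factor occurs infinitely many times. -/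
def Recurrent {A : Type*} (x : ℤ → A) : Prop :=
  ∀ w : List A, FactorOf x w → ∀ N : ℤ, ∃ i : ℤ, N ≤ i ∧ w = seg x i (i + w.length)

/-- Number of occurrences of `u` in `w`. -/
def occCount {A : Type*} [DecidableEq A] (u w : List A) : ℕ :=
  (List.range (w.length + 1)).countP fun i => decide (u <+: w.drop i)

/-- `r` is a return word to `u` in `x`. -/
def ReturnWordOf {A : Type*} [DecidableEq A] (x : ℤ → A) (u r : List A) : Prop :=
  FactorOf x (r ++ u) ∧ u <+: (r ++ u) ∧ occCount u (r ++ u) = 2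

/-- `r` is a return word to `u` in the language of `σ`. -/
def ReturnWordLang {A : Type*} [DecidableEq A] (σ : A → List A) (u r : List A) : Prop :=
  LangOf σ (r ++ u) ∧ u <+: (r ++ u) ∧ occCount u (r ++ u) = 2

/-- `x` is linearly recurrent with constant `K`. -/
def LinRec {A : Type*} [DecidableEq A] (x : ℤ → A) (K : ℕ) : Prop :=
  Recurrent x ∧ ∀ u r : List A, FactorOf x u → ReturnWordOf x u r → r.length ≤ K * u.length

/-- `x` is aperiodic (not periodic). -/
def AperiodicSeq {A : Type*} (x : ℤ → A) : Prop :=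
  ¬ ∃ p : ℤ, 0 < p ∧ ∀ i : ℤ, x (i + p) = x i

/-- Factor complexity of `x`. -/
noncomputable def complexity {A : Type*} (x : ℤ → A) (n : ℕ) : ℕ :=
  Set.ncard {w : List A | FactorOf x w ∧ w.length = n}

section StmtFiveAux

variable {A : Type*} (σ : A → List A)

lemma applyW_append' (x y : List A) : applyW σ (x ++ y) = applyW σ x ++ applyW σ y := by
  simp [applyW]

lemma applyW_single (b : A) : applyW σ [b] = σ b := by simp [applyW]

lemma iterW_succ_right (n : ℕ) (w : List A) : iterW σ (n+1) w = applyW σ (iterW σ n w) :=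
  Function.iterate_succ_apply' _ _ _

lemma iterW_succ_left (n : ℕ) (w : List A) : iterW σ (n+1) w = iterW σ n (applyW σ w) :=
  Function.iterate_succ_apply _ _ _

lemma iterW_append (n : ℕ) (x y : List A) :
    iterW σ n (x ++ y) = iterW σ n x ++ iterW σ n y := by
  induction n with
  | zero => rfl
  | succ n ih => rw [iterW_succ_right, iterW_succ_right, iterW_succ_right, ih, applyW_append']

lemma iter_prefix_succ {a : A} (ha : Prolongable σ a) (n : ℕ) :
    iterW σ n [a] <+: iterW σ (n+1) [a] := by
  obtain ⟨u, hu, hau⟩ := ha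
  have h1 : applyW σ [a] = [a] ++ u := by simp [applyW, hau]
  rw [iterW_succ_left, h1, iterW_append]
  exact List.prefix_append _ _

lemma iter_prefix_le {a : A} (ha : Prolongable σ a) {m n : ℕ} (h : m ≤ n) :
    iterW σ m [a] <+: iterW σ n [a] := by
  induction h with
  | refl => exact List.prefix_refl _
  | step h ih => exact ih.trans (iter_prefix_succ σ ha _)

lemma le_length_applyW (hne : NonErasing σ) (z : List A) :
    z.length ≤ (applyW σ z).length := by
  induction z with
  | nil => simp [applyW]
  | cons b z ih =>
    have hb : 1 ≤ (σ b).length := List.length_pos_iff.mpr (hne b)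
    simp only [applyW, List.flatMap_cons, List.length_append, List.length_cons] at *
    omega

lemma le_length_iterW (hne : NonErasing σ) (n : ℕ) (z : List A) :
    z.length ≤ (iterW σ n z).length := by
  induction n with
  | zero => exact le_refl _
  | succ n ih => rw [iterW_succ_right]; exact ih.trans (le_length_applyW σ hne _)

lemma two_le_length_iterW (hne : NonErasing σ) {a : A} (ha : Prolongable σ a)
    {n : ℕ} (hn : 1 ≤ n) : 2 ≤ (iterW σ n [a]).length := by
  obtain ⟨m, rfl⟩ : ∃ m, n = m + 1 := ⟨n - 1, by omega⟩
  obtain ⟨u, hu, hau⟩ := ha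
  rw [iterW_succ_left]
  have h1 : applyW σ [a] = a :: u := by simp [applyW, hau]
  have h2 := le_length_iterW σ hne m (a :: u)
  have h3 : 1 ≤ u.length := List.length_pos_iff.mpr hu
  rw [h1]
  simp only [List.length_cons] at h2 ⊢
  omega

lemma infix_applyW {w z : List A} (h : w <:+: z) : applyW σ w <:+: applyW σ z := by
  obtain ⟨s, t, rfl⟩ := h
  rw [applyW_append', applyW_append']
  exact List.infix_append _ _ _

/-- splitting an infix occurrence falling inside the left part of an append -/
lemma infix_split_left {p w q s t : List A} (h : p ++ w ++ q = s ++ t)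
    (hle : p.length + w.length ≤ s.length) : w <:+: s := by
  have h1 : (p ++ w ++ q).take (p.length + w.length) = p ++ w :=
    List.take_left' (by simp)
  have h2 : (s ++ t).take (p.length + w.length) = s.take (p.length + w.length) :=
    List.take_append_of_le_length hle
  have h3 : p ++ w = s.take (p.length + w.length) := by rw [← h1, h, h2]
  have h4 : p ++ w <+: s := h3 ▸ List.take_prefix _ _
  obtain ⟨r, hr⟩ := h4
  exact ⟨p, r, by rw [← hr, List.append_assoc]⟩

/-- splitting an infix occurrence falling inside the right part of an append -/
lemma infix_split_right {p w q s t : List A} (h : p ++ w ++ q = s ++ t)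
    (hle : s.length ≤ p.length) : w <:+: t := by
  have h' : p ++ (w ++ q) = s ++ t := by rw [← List.append_assoc]; exact h
  have h2 : p.take s.length = s := by
    have h1 := List.take_append_of_le_length (l₂ := w ++ q) hle
    rw [h', List.take_left] at h1
    exact h1.symm
  have h3 : p = s ++ p.drop s.length := by
    conv_lhs => rw [← List.take_append_drop s.length p]
    rw [h2]
  rw [h3, List.append_assoc, List.append_assoc] at h
  have h4 := List.append_cancel_left h
  exact ⟨p.drop s.length, q, by rw [List.append_assoc, h4]⟩

lemma key_factor (hne : NonErasing σ) :
    ∀ z w : List A, w.length = 2 → w <:+: applyW σ z →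
      ∃ v, v ≠ [] ∧ v.length ≤ 2 ∧ v <:+: z ∧ w <:+: applyW σ v := by
  intro z
  induction z with
  | nil =>
    intro w hw h
    simp only [applyW, List.flatMap_nil] at h
    rw [List.infix_nil] at h
    subst h; simp at hw
  | cons b z ih =>
    intro w hw h
    obtain ⟨x, y, rfl⟩ : ∃ x y, w = [x, y] := by
      match w, hw with | [x, y], _ => exact ⟨x, y, rfl⟩
    have hsplit : applyW σ (b :: z) = σ b ++ applyW σ z := by simp [applyW]
    rw [hsplit] at h
    obtain ⟨p, q, hpq⟩ := h
    rcases (show p.length + 2 ≤ (σ b).length ∨ p.length + 1 = (σ b).length ∨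
        (σ b).length ≤ p.length from by omega) with hc | hc | hc
    · -- inside σ b
      refine ⟨[b], by simp, by simp, ⟨[], z, rfl⟩, ?_⟩
      rw [applyW_single]
      exact infix_split_left hpq (by simpa using hc)
    · -- straddling
      have hx : σ b = p ++ [x] := by
        have h1 : (p ++ [x, y] ++ q).take (p.length + 1) = p ++ [x] := by
          rw [show p ++ [x, y] ++ q = (p ++ [x]) ++ (y :: q) from by simp]
          exact List.take_left' (by simp)
        have h2 : (σ b ++ applyW σ z).take (p.length + 1) = σ b := by
          rw [hc]; exact List.take_left
        rw [← h2, ← hpq, h1]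
      have hy : applyW σ z = y :: q := by
        have h1 : (p ++ [x, y] ++ q).drop (p.length + 1) = y :: q := by
          rw [show p ++ [x, y] ++ q = (p ++ [x]) ++ (y :: q) from by simp]
          rw [List.drop_left' (by simp)]
        have h2 : (σ b ++ applyW σ z).drop (p.length + 1) = applyW σ z := by
          rw [hc]; exact List.drop_left
        rw [← h2, ← hpq, h1]
      rcases z with _ | ⟨c, z'⟩
      · simp [applyW] at hy
      · have hz : applyW σ (c :: z') = σ c ++ applyW σ z' := by simp [applyW]
        rw [hz] at hy
        obtain ⟨r, hr⟩ : ∃ r, σ c = y :: r := by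
          rcases hσc : σ c with _ | ⟨d, r⟩
          · exact absurd hσc (hne c)
          · rw [hσc] at hy
            simp only [List.cons_append, List.cons.injEq] at hy
            exact ⟨r, by rw [hy.1]⟩
        refine ⟨[b, c], by simp, by simp, ⟨[], z', rfl⟩, ?_⟩
        have : applyW σ [b, c] = p ++ [x, y] ++ r := by
          simp [applyW, hx, hr]
        rw [this]
        exact List.infix_append _ _ _
    · -- inside the tail
      have h5 : [x, y] <:+: applyW σ z := infix_split_right hpq hc
      obtain ⟨v, h1, h2, h3, h4⟩ := ih [x, y] rfl h5
      exact ⟨v, h1, h2, List.infix_cons h3, h4⟩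

lemma neighbor_pair : ∀ z : List A, 2 ≤ z.length → ∀ b ∈ z,
    ∃ c d, [c, d] <:+: z ∧ (b = c ∨ b = d) := by
  intro z
  induction z with
  | nil => simp
  | cons e z ih =>
    intro hz b hb
    rcases z with _ | ⟨f, z'⟩
    · simp at hz
    rcases List.mem_cons.mp hb with rfl | hb'
    · exact ⟨b, f, ⟨[], z', rfl⟩, Or.inl rfl⟩
    · rcases z' with _ | ⟨g, z''⟩
      · have hb : b = f := by simpa using hb'
        exact ⟨e, f, ⟨[], [], rfl⟩, Or.inr hb⟩
      · obtain ⟨c, d, h1, h2⟩ := ih (by simp) b hb'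
        exact ⟨c, d, List.infix_cons h1, h2⟩

/-- The set of pairs of adjacent letters in `σⁿ(a)`. -/
def pairSet (a : A) (n : ℕ) : Set (A × A) := {p | [p.1, p.2] <:+: iterW σ n [a]}

lemma pairSet_mono {a : A} (ha : Prolongable σ a) {m n : ℕ} (h : m ≤ n) :
    pairSet σ a m ⊆ pairSet σ a n := by
  intro p hp
  exact hp.trans (iter_prefix_le σ ha h).isInfix

lemma pairSet_step (hne : NonErasing σ) {a : A} (ha : Prolongable σ a)
    {m : ℕ} (hm : 1 ≤ m) :
    pairSet σ a (m + 1) =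
      {p | ∃ q ∈ pairSet σ a m, [p.1, p.2] <:+: applyW σ [q.1, q.2]} := by
  ext ⟨x, y⟩
  constructor
  · intro h
    have h' : [x, y] <:+: applyW σ (iterW σ m [a]) := by
      rwa [← iterW_succ_right]
    obtain ⟨v, hv0, hv2, hvinf, hw⟩ := key_factor σ hne _ [x, y] rfl h'
    rcases v with _ | ⟨b, _ | ⟨c, _ | _⟩⟩
    · exact absurd rfl hv0
    · -- single letter b
      have hb : b ∈ iterW σ m [a] := hvinf.subset (by simp)
      obtain ⟨c, d, h1, h2⟩ := neighbor_pair (iterW σ m [a]) (two_le_length_iterW σ hne ha hm) b hb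
      have hbc : σ b <:+: applyW σ [c, d] := by
        rcases h2 with rfl | rfl
        · exact ⟨[], applyW σ [d], by simp [applyW]⟩
        · exact ⟨σ c, [], by simp [applyW]⟩
      rw [applyW_single] at hw
      exact ⟨(c, d), h1, hw.trans hbc⟩
    · exact ⟨(b, c), hvinf, hw⟩
    · simp at hv2
  · rintro ⟨q, hq, hinf⟩
    have h1 : applyW σ [q.1, q.2] <:+: applyW σ (iterW σ m [a]) := infix_applyW σ hq
    have h2 : [x, y] <:+: applyW σ (iterW σ m [a]) := hinf.trans h1
    rwa [← iterW_succ_right] at h2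

lemma pairSet_stab (hne : NonErasing σ) {a : A} (ha : Prolongable σ a)
    {k : ℕ} (hk1 : 1 ≤ k) (hk : pairSet σ a (k + 1) = pairSet σ a k) :
    ∀ m, k ≤ m → pairSet σ a m = pairSet σ a k := by
  intro m hm
  induction m, hm using Nat.le_induction with
  | base => rfl
  | succ m hm ih =>
    rw [pairSet_step σ hne ha (le_trans hk1 hm), ih, ← pairSet_step σ hne ha hk1, hk]

end StmtFiveAux

theorem stmt5 {A : Type*} [Fintype A] (σ : A → List A) (hσ : PrimitiveSub σ)
    (hne : NonErasing σ) (a : A) (ha : Prolongable σ a) :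
    ∀ n : ℕ, Fintype.card A ^ 2 < n →
      ∀ w : List A, w.length = 2 → (∃ m : ℕ, w <:+: iterW σ m [a]) →
        w <:+: iterW σ n [a] := by
  classical
  set C := Fintype.card A ^ 2 with hC
  -- cardinality bound
  have hcard : ∀ n, (pairSet σ a n).ncard ≤ C := by
    intro n
    have h1 := Set.ncard_le_ncard (Set.subset_univ (pairSet σ a n)) Set.finite_univ
    have h2 : (Set.univ : Set (A × A)).ncard = C := by
      rw [Set.ncard_univ, Nat.card_eq_fintype_card, Fintype.card_prod, hC, sq]
    omega
  -- the pair set at time 1 is nonempty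
  have hne1 : (pairSet σ a 1).Nonempty := by
    obtain ⟨u, hu, hau⟩ := ha
    rcases u with _ | ⟨u0, u'⟩
    · exact absurd rfl hu
    refine ⟨(a, u0), ?_⟩
    show [a, u0] <:+: iterW σ 1 [a]
    have h1 : iterW σ 1 [a] = a :: u0 :: u' := by
      show applyW σ [a] = _
      simp [applyW, hau]
    rw [h1]
    exact ⟨[], u', rfl⟩
  -- stabilization index
  have hstabk : ∃ k, 1 ≤ k ∧ k ≤ C ∧ pairSet σ a (k + 1) = pairSet σ a k := by
    by_contra hcon
    push_neg at hcon
    have key : ∀ j, j ≤ C → j + 1 ≤ (pairSet σ a (j + 1)).ncard := by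
      intro j
      induction j with
      | zero =>
        intro _
        have := (Set.ncard_pos (Set.toFinite _)).mpr hne1
        simpa using Nat.succ_le_of_lt this
      | succ j ih =>
        intro hj
        have h1 := ih (by omega)
        have hne' := hcon (j + 1) (by omega) hj
        have hsub : pairSet σ a (j + 1) ⊆ pairSet σ a (j + 1 + 1) :=
          pairSet_mono σ ha (by omega)
        have hss : pairSet σ a (j + 1) ⊂ pairSet σ a (j + 1 + 1) :=
          HasSubset.Subset.ssubset_of_ne hsub (Ne.symm hne')
        have := Set.ncard_lt_ncard hss (Set.toFinite _)
        omega
    have h1 := key C (le_refl _)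
    have h2 := hcard (C + 1)
    omega
  obtain ⟨k, hk1, hkC, hk⟩ := hstabk
  have hstab := pairSet_stab σ hne ha hk1 hk
  intro n hn w hw hm
  obtain ⟨m, hm⟩ := hm
  obtain ⟨x, y, rfl⟩ : ∃ x y, w = [x, y] := by
    match w, hw with | [x, y], _ => exact ⟨x, y, rfl⟩
  by_cases hmn : m ≤ n
  · exact hm.trans (iter_prefix_le σ ha hmn).isInfix
  · have h1 : (x, y) ∈ pairSet σ a m := hm
    have h2 : pairSet σ a m = pairSet σ a k := hstab m (by omega)
    have h3 : pairSet σ a n = pairSet σ a k := hstab n (by omega)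
    have h4 : (x, y) ∈ pairSet σ a n := by rw [h3, ← h2]; exact h1
    exact h4
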